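/- Let H be a closed subgroup of GL(n,ℝ) and let U ⊆ ℝⁿ be open and Hᵀ-invariant. If there exists a topological quasi-section for U, then for all compact sets C₁, C₂ ⊆ U the set ((C₁,C₂)) = {h ∈ H : hᵀC₁ ∩ C₂ ≠ ∅} is relatively compact in H. -/
import Mathlib


open Matrix Set Topology
open scoped MatrixGroups

noncomputable section

variable {n : ℕ}

/-- The transpose action of an element of `GL(n,ℝ)` on `ℝⁿ`: `(h, ξ) ↦ hᵀ ξ`. -/
def tAct (h : GL (Fin n) ℝ) (v : Fin n → ℝ) : Fin n → ℝ :=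
  ((h : Matrix (Fin n) (Fin n) ℝ)ᵀ) *ᵥ v

/-- A set `U ⊆ ℝⁿ` is `Hᵀ`-invariant. -/
def TInvariant (H : Subgroup (GL (Fin n) ℝ)) (U : Set (Fin n → ℝ)) : Prop :=
  ∀ h ∈ H, ∀ v ∈ U, tAct h v ∈ U

/-- `HᵀC = {hᵀ c : h ∈ H, c ∈ C}`. -/
def tOrb (H : Subgroup (GL (Fin n) ℝ)) (C : Set (Fin n → ℝ)) : Set (Fin n → ℝ) :=
  {v | ∃ h ∈ H, ∃ c ∈ C, tAct h c = v}

/-- `((Y,Z)) = {h ∈ H : hᵀY ∩ Z ≠ ∅}`, as a set of elements of `GL(n,ℝ)`. -/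
def meetSet (H : Subgroup (GL (Fin n) ℝ)) (Y Z : Set (Fin n → ℝ)) :
    Set (GL (Fin n) ℝ) :=
  {h | h ∈ H ∧ ∃ y ∈ Y, tAct h y ∈ Z}

/-- `C` is a topological quasi-section for `U`: `C` is open, `HᵀC = U`, and `((C,C))`
is relatively compact. -/
def IsQuasiSection (H : Subgroup (GL (Fin n) ℝ)) (U C : Set (Fin n → ℝ)) : Prop :=
  IsOpen C ∧ C ⊆ U ∧ tOrb H C = U ∧ IsCompact (closure (meetSet H C C))

/-- `C` is a topological section for `U`: the map `H × C → U, (h,c) ↦ hᵀc` is a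
homeomorphism. -/
def IsTopSection (H : Subgroup (GL (Fin n) ℝ)) (U C : Set (Fin n → ℝ)) : Prop :=
  C ⊆ U ∧ ∃ e : (↥H × ↥C) ≃ₜ ↥U,
    ∀ (h : ↥H) (c : ↥C), ((e (h, c) : ↥U) : Fin n → ℝ) = tAct (h : GL (Fin n) ℝ) (c : Fin n → ℝ)

/-- The orbit equivalence relation on `U` induced by the transpose action of `H`.
`Quot (orbitRel H U)` is the orbit space `U/Hᵀ`, carrying the quotient topology. -/
def orbitRel (H : Subgroup (GL (Fin n) ℝ)) (U : Set (Fin n → ℝ)) (x y : U) : Prop :=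
  ∃ h ∈ H, tAct h (x : Fin n → ℝ) = (y : Fin n → ℝ)


lemma tAct_mul (g h : GL (Fin n) ℝ) (v : Fin n → ℝ) :
    tAct (g * h) v = tAct h (tAct g v) := by
  simp [tAct, Matrix.transpose_mul, Matrix.mulVec_mulVec]

lemma tAct_one (v : Fin n → ℝ) : tAct (1 : GL (Fin n) ℝ) v = v := by
  simp [tAct]

lemma tAct_inv_tAct (h : GL (Fin n) ℝ) (v : Fin n → ℝ) :
    tAct h⁻¹ (tAct h v) = v := by
  rw [← tAct_mul, mul_inv_cancel, tAct_one]

lemma continuous_tAct (h : GL (Fin n) ℝ) : Continuous (tAct h) := by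
  have : tAct h = (Matrix.mulVecLin ((h : Matrix (Fin n) (Fin n) ℝ)ᵀ)) := by
    ext v i; rfl
  rw [this]
  exact LinearMap.continuous_of_finiteDimensional _

lemma tAct_image_eq (h : GL (Fin n) ℝ) (C : Set (Fin n → ℝ)) :
    tAct h '' C = tAct h⁻¹ ⁻¹' C := by
  ext v
  constructor
  · rintro ⟨c, hc, rfl⟩
    simpa [Set.mem_preimage, tAct_inv_tAct] using hc
  · intro hv
    refine ⟨tAct h⁻¹ v, hv, ?_⟩
    rw [← tAct_mul, inv_mul_cancel, tAct_one]

lemma isOpen_tAct_image (h : GL (Fin n) ℝ) {C : Set (Fin n → ℝ)} (hC : IsOpen C) :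
    IsOpen (tAct h '' C) := by
  rw [tAct_image_eq]
  exact hC.preimage (continuous_tAct _)

/-- If the open `Hᵀ`-invariant set `U` admits a topological
quasi-section, then for all compact `C₁, C₂ ⊆ U` the set `((C₁,C₂))` is relatively
compact in `H`. -/
theorem meetSet_relCompact_of_quasiSection
    (H : Subgroup (GL (Fin n) ℝ)) (hH : IsClosed (H : Set (GL (Fin n) ℝ)))
    (U : Set (Fin n → ℝ)) (hUopen : IsOpen U) (hUinv : TInvariant H U)
    (C : Set (Fin n → ℝ)) (hC : IsQuasiSection H U C) :
    ∀ C₁ C₂ : Set (Fin n → ℝ), C₁ ⊆ U → C₂ ⊆ U → IsCompact C₁ → IsCompact C₂ →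
      IsCompact (closure (meetSet H C₁ C₂)) := by
  intro C₁ C₂ hC₁U hC₂U hc₁ hc₂
  obtain ⟨hCopen, hCU, hOrb, hK⟩ := hC
  have key : ∀ x ∈ U, ∃ h, h ∈ H ∧ x ∈ tAct h '' C := by
    intro x hx
    rw [← hOrb] at hx
    obtain ⟨h, hh, c, hc, hcx⟩ := hx
    exact ⟨h, hh, c, hc, hcx⟩
  choose! f hfH hfx using key
  have hcov1 : C₁ ⊆ ⋃ x ∈ C₁, tAct (f x) '' C := by
    intro y hy
    exact Set.mem_biUnion hy (hfx y (hC₁U hy))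
  have hcov2 : C₂ ⊆ ⋃ x ∈ C₂, tAct (f x) '' C := by
    intro y hy
    exact Set.mem_biUnion hy (hfx y (hC₂U hy))
  obtain ⟨s₁, hs₁sub, hs₁fin, hs₁⟩ :=
    hc₁.elim_finite_subcover_image (fun x _ => isOpen_tAct_image (f x) hCopen) hcov1
  obtain ⟨s₂, hs₂sub, hs₂fin, hs₂⟩ :=
    hc₂.elim_finite_subcover_image (fun x _ => isOpen_tAct_image (f x) hCopen) hcov2
  set T : Set (GL (Fin n) ℝ) :=
    ⋃ x ∈ s₁, ⋃ z ∈ s₂,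
      (fun g => (f x)⁻¹ * g * (f z)) '' closure (meetSet H C C) with hT
  have hTcomp : IsCompact T := by
    refine hs₁fin.isCompact_biUnion (fun x _ => ?_)
    refine hs₂fin.isCompact_biUnion (fun z _ => ?_)
    exact hK.image (((continuous_mul_left _).comp continuous_id).mul continuous_const)
  have hsub : meetSet H C₁ C₂ ⊆ T := by
    rintro h ⟨hhH, y, hyC₁, hyC₂⟩
    obtain ⟨x, hxs₁, c, hcC, hcy⟩ := by
      have := hs₁ hyC₁
      simpa using this
    obtain ⟨z, hzs₂, c', hc'C, hc'y⟩ := by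
      have := hs₂ hyC₂
      simpa using this
    have hg : (f x) * h * (f z)⁻¹ ∈ meetSet H C C := by
      refine ⟨H.mul_mem (H.mul_mem (hfH x (hC₁U (hs₁sub hxs₁))) hhH) (H.inv_mem (hfH z (hC₂U (hs₂sub hzs₂)))), c, hcC, ?_⟩
      have : tAct ((f x) * h * (f z)⁻¹) c = tAct (f z)⁻¹ (tAct h (tAct (f x) c)) := by
        rw [tAct_mul, tAct_mul]
      rw [this, hcy, ← hc'y, tAct_inv_tAct]
      exact hc'C
    refine Set.mem_biUnion hxs₁ (Set.mem_biUnion hzs₂ ?_)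
    refine ⟨(f x) * h * (f z)⁻¹, subset_closure hg, ?_⟩
    group
  exact hTcomp.of_isClosed_subset isClosed_closure
    (closure_minimal hsub hTcomp.isClosed)
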